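/- Conversely, if F is long-tailed and there exists a function h(x) → ∞ with h(x) ≤ x/2 for large x such that J(x, h(x)) ≤ c F̄(h(x)) and K(x, h(x)) ≤ F̄(h(x)) for all large x (for some c > 1), then F is subexponential. -/

import Mathlib

open Filter MeasureTheory Set

noncomputable def tail (μ : Measure ℝ) (x : ℝ) : ℝ := (μ (Set.Ioi x)).toReal

noncomputable def convn (μ : Measure ℝ) : ℕ → Measure ℝ
  | 0 => Measure.dirac 0
  | n + 1 => ((convn μ n).prod μ).map (fun p : ℝ × ℝ => p.1 + p.2)

/-- Lemma 1 (converse direction): if F is long-tailed and for some c > 1 there is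
h(x) → ∞, h(x) ≤ x/2 for large x, with J(x,h(x)) ≤ c F̄(h(x)) and
K(x,h(x)) ≤ F̄(h(x)) for all large x, then F is subexponential. -/
theorem longTailed_h_subexp (μ : Measure ℝ) [IsProbabilityMeasure μ]
    (hsupp : μ (Set.Iio 0) = 0) (hunb : ∀ x, 0 < μ (Set.Ioi x))
    (hlong : Tendsto (fun x => tail μ (x - 1) / tail μ x) atTop (nhds 1))
    (c : ℝ) (hc : 1 < c) (h : ℝ → ℝ)
    (hhinf : Tendsto h atTop atTop)
    (hhalf : ∀ᶠ x in atTop, h x ≤ x / 2)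
    (hJ : ∀ᶠ x in atTop,
      (∫ y in Set.Ioc (h x) (x - h x), tail μ (x - y) / tail μ x ∂μ) ≤
        c * tail μ (h x))
    (hK : ∀ᶠ x in atTop, tail μ (x - h x) / tail μ x - 1 ≤ tail μ (h x)) :
    Tendsto (fun x => tail (convn μ 2) x / tail μ x) atTop (nhds 2) := by
  -- basic facts about tail
  have hIic : ∀ x : ℝ, (μ (Set.Iic x)).toReal = 1 - tail μ x := by
    intro x
    have h2 : μ (Set.Iic x) + μ (Set.Ioi x) = 1 := by
      rw [← Set.compl_Iic, measure_add_measure_compl measurableSet_Iic]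
      exact measure_univ
    have h3 := congrArg ENNReal.toReal h2
    rw [ENNReal.toReal_add (measure_ne_top _ _) (measure_ne_top _ _)] at h3
    simp at h3
    unfold tail; linarith
  have hFpos : ∀ x, 0 < tail μ x := fun x =>
    ENNReal.toReal_pos (hunb x).ne' (measure_ne_top _ _)
  have hanti : Antitone (tail μ) := by
    intro s t hst
    exact ENNReal.toReal_mono (measure_ne_top _ _)
      (measure_mono (Set.Ioi_subset_Ioi hst))
  have hmeas : Measurable (tail μ) := hanti.measurable
  have hF0 : Tendsto (fun x => tail μ x) atTop (nhds 0) := by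
    have h4 : Tendsto (fun x => (μ (Set.Iic x)).toReal) atTop (nhds 1) := by
      have h5 := tendsto_measure_Iic_atTop (α := ℝ) μ
      simp only [measure_univ] at h5
      have h6 := (ENNReal.tendsto_toReal (ENNReal.one_ne_top)).comp h5
      simpa [Function.comp_def] using h6
    simp only [hIic] at h4
    have h7 := h4.const_sub 1
    simpa using h7
  have hFh0 : Tendsto (fun x => tail μ (h x)) atTop (nhds 0) := hF0.comp hhinf
  -- convolution tail formula
  have hconv2 : ∀ x : ℝ, (convn μ 2) (Set.Ioi x) = ∫⁻ a, μ (Set.Ioi (x - a)) ∂μ := by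
    intro x
    have hc1 : convn μ 1 = μ := by
      show (((Measure.dirac (0:ℝ)).prod μ).map (fun p : ℝ × ℝ => p.1 + p.2)) = μ
      rw [Measure.dirac_prod, Measure.map_map (by fun_prop) (by fun_prop)]
      simp [Function.comp_def]
    show (((convn μ 1).prod μ).map (fun p : ℝ × ℝ => p.1 + p.2)) (Set.Ioi x) = _
    rw [hc1, Measure.map_apply (by fun_prop) measurableSet_Ioi]
    have hpre : (fun p : ℝ × ℝ => p.1 + p.2) ⁻¹' Set.Ioi x
        = {p : ℝ × ℝ | x - p.1 < p.2} := by
      ext p; simp [sub_lt_iff_lt_add, add_comm]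
    rw [hpre, Measure.prod_apply (measurableSet_lt (by fun_prop) measurable_snd)]
    rfl
  have hone : ∀ t : ℝ, t < 0 → μ (Set.Ioi t) = 1 := by
    intro t ht
    have h2 : μ (Set.Iic t) + μ (Set.Ioi t) = 1 := by
      rw [← Set.compl_Iic, measure_add_measure_compl measurableSet_Iic]
      exact measure_univ
    have h3 : μ (Set.Iic t) = 0 :=
      measure_mono_null (Set.Iic_subset_Iio.mpr ht) hsupp
    rwa [h3, zero_add] at h2
  have hfin : ∀ (x : ℝ) (s : Set ℝ), (∫⁻ a in s, μ (Set.Ioi (x - a)) ∂μ) ≤ 1 := by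
    intro x s
    calc (∫⁻ a in s, μ (Set.Ioi (x - a)) ∂μ) ≤ ∫⁻ _ in s, 1 ∂μ :=
          lintegral_mono (fun a => prob_le_one)
      _ = μ s := by simp
      _ ≤ 1 := prob_le_one
  -- lower bound
  have hlow : ∀ᶠ x in atTop, 2 - tail μ x ≤ tail (convn μ 2) x / tail μ x := by
    filter_upwards [eventually_ge_atTop (0:ℝ)] with x hx0
    have key : (μ (Set.Ioi x)) * (μ (Set.Iic x)) + μ (Set.Ioi x)
        ≤ ∫⁻ a, μ (Set.Ioi (x - a)) ∂μ := by
      have hsplit : (∫⁻ a in Set.Icc 0 x, μ (Set.Ioi (x - a)) ∂μ)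
            + (∫⁻ a in Set.Ioi x, μ (Set.Ioi (x - a)) ∂μ)
          ≤ ∫⁻ a, μ (Set.Ioi (x - a)) ∂μ := by
        rw [← lintegral_union measurableSet_Ioi
          (Set.disjoint_left.2 (fun a ha ha' => (not_le.2 ha') ha.2))]
        exact setLIntegral_le_lintegral _ _
      refine le_trans (add_le_add ?_ ?_) hsplit
      · have h1 : μ (Set.Ioi x) * μ (Set.Icc 0 x)
            ≤ ∫⁻ a in Set.Icc 0 x, μ (Set.Ioi (x - a)) ∂μ := by
          have := setLIntegral_mono' (s := Set.Icc (0:ℝ) x) (f := fun _ => μ (Set.Ioi x))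
            (g := fun a => μ (Set.Ioi (x - a))) (μ := μ) measurableSet_Icc
            (fun a ha => measure_mono
              (Set.Ioi_subset_Ioi (show x - a ≤ x by linarith [ha.1])))
          simpa [lintegral_const] using this
        have h2 : μ (Set.Icc 0 x) = μ (Set.Iic x) := by
          have hs : Set.Iic x = Set.Icc 0 x ∪ Set.Iio 0 := by
            ext a; simp only [Set.mem_Iic, Set.mem_union, Set.mem_Icc, Set.mem_Iio]
            constructor
            · intro ha; rcases le_or_gt 0 a with h' | h'
              · exact Or.inl ⟨h', ha⟩
              · exact Or.inr h'
            · rintro (⟨_, ha⟩ | ha); exact ha; linarith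
          refine le_antisymm (measure_mono Set.Icc_subset_Iic_self) ?_
          rw [hs]
          exact le_trans (measure_union_le _ _) (by rw [hsupp, add_zero])
        rwa [h2] at h1
      · have := setLIntegral_mono' (f := fun _ => (1:ENNReal))
          (g := fun a => μ (Set.Ioi (x - a))) (μ := μ) measurableSet_Ioi
          (fun a ha => le_of_eq (hone (x - a)
            (by simp only [Set.mem_Ioi] at ha; linarith)).symm)
        simpa [lintegral_const] using this
    have hLfin : (∫⁻ a, μ (Set.Ioi (x - a)) ∂μ) ≠ ⊤ := by
      refine ne_top_of_le_ne_top ENNReal.one_ne_top ?_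
      calc (∫⁻ a, μ (Set.Ioi (x - a)) ∂μ) ≤ ∫⁻ _, 1 ∂μ :=
            lintegral_mono (fun a => prob_le_one)
        _ = 1 := by simp
    have hto := ENNReal.toReal_mono hLfin key
    rw [ENNReal.toReal_add (by finiteness) (measure_ne_top _ _),
      ENNReal.toReal_mul, hIic] at hto
    have htail : tail (convn μ 2) x = (∫⁻ a, μ (Set.Ioi (x - a)) ∂μ).toReal := by
      unfold tail; rw [hconv2]
    rw [le_div_iff₀ (hFpos x), htail]
    calc (2 - tail μ x) * tail μ x = tail μ x * (1 - tail μ x) + tail μ x := by ring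
      _ ≤ _ := hto
  -- upper bound
  have hup : ∀ᶠ x in atTop,
      tail (convn μ 2) x / tail μ x ≤ 2 + (2 + c) * tail μ (h x) := by
    filter_upwards [hhalf, hJ, hK, hhinf.eventually (eventually_ge_atTop (0:ℝ)),
      eventually_ge_atTop (0:ℝ)] with x hhx hJx hKx hh0 hx0
    have hhle : h x ≤ x - h x := by
      have : h x ≤ x / 2 := hhx; linarith
    -- split the integral
    set A := ∫⁻ a in Set.Iic (h x), μ (Set.Ioi (x - a)) ∂μ with hA
    set B := ∫⁻ a in Set.Ioc (h x) (x - h x), μ (Set.Ioi (x - a)) ∂μ with hB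
    set C := ∫⁻ a in Set.Ioi (x - h x), μ (Set.Ioi (x - a)) ∂μ with hC
    have hsplit : (∫⁻ a, μ (Set.Ioi (x - a)) ∂μ) = A + B + C := by
      have hu1 : Set.Iic (h x) ∪ Set.Ioc (h x) (x - h x) = Set.Iic (x - h x) :=
        Set.Iic_union_Ioc_eq_Iic hhle
      have hu2 : Set.Iic (x - h x) ∪ Set.Ioi (x - h x) = Set.univ :=
        Set.Iic_union_Ioi
      rw [← setLIntegral_univ, ← hu2, ← hu1,
        lintegral_union measurableSet_Ioi
          (by rw [hu1]; exact Set.Iic_disjoint_Ioi le_rfl),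
        lintegral_union measurableSet_Ioc
          (Set.Iic_disjoint_Ioi le_rfl |>.mono_right Set.Ioc_subset_Ioi_self)]
    -- bound A
    have hAle : A.toReal ≤ tail μ (x - h x) := by
      have h1 : A ≤ μ (Set.Ioi (x - h x)) := by
        calc A ≤ ∫⁻ _ in Set.Iic (h x), μ (Set.Ioi (x - h x)) ∂μ :=
              setLIntegral_mono' measurableSet_Iic
                (fun a ha => measure_mono (Set.Ioi_subset_Ioi
                  (show x - h x ≤ x - a by simp only [Set.mem_Iic] at ha; linarith)))
          _ = μ (Set.Ioi (x - h x)) * μ (Set.Iic (h x)) := by simp [lintegral_const]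
          _ ≤ μ (Set.Ioi (x - h x)) * 1 := mul_le_mul_right prob_le_one _
          _ = μ (Set.Ioi (x - h x)) := mul_one _
      exact ENNReal.toReal_mono (measure_ne_top _ _) h1
    -- bound C
    have hCle : C.toReal ≤ tail μ (x - h x) := by
      have h1 : C ≤ μ (Set.Ioi (x - h x)) := by
        calc C ≤ ∫⁻ _ in Set.Ioi (x - h x), 1 ∂μ :=
              lintegral_mono (fun a => prob_le_one)
          _ = μ (Set.Ioi (x - h x)) := by simp
      exact ENNReal.toReal_mono (measure_ne_top _ _) h1
    -- bound B via hJ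
    have hBeq : B.toReal = ∫ y in Set.Ioc (h x) (x - h x), tail μ (x - y) ∂μ := by
      have hm : Measurable fun y : ℝ => tail μ (x - y) := hmeas.comp (by fun_prop)
      have h0 := integral_eq_lintegral_of_nonneg_ae
        (μ := μ.restrict (Set.Ioc (h x) (x - h x)))
        (f := fun y : ℝ => tail μ (x - y))
        (ae_of_all _ (fun y => ENNReal.toReal_nonneg)) hm.aestronglyMeasurable
      rw [h0]
      congr 1
      refine lintegral_congr (fun a => ?_)
      exact (ENNReal.ofReal_toReal (measure_ne_top _ _)).symm
    have hBle : B.toReal ≤ c * tail μ (h x) * tail μ x := by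
      rw [hBeq]
      have h1 : (∫ y in Set.Ioc (h x) (x - h x), tail μ (x - y) ∂μ) / tail μ x
          ≤ c * tail μ (h x) := by
        rw [← integral_div]
        exact hJx
      rwa [div_le_iff₀ (hFpos x)] at h1
    -- K bound
    have hKle : tail μ (x - h x) ≤ (1 + tail μ (h x)) * tail μ x := by
      have h1 : tail μ (x - h x) / tail μ x ≤ 1 + tail μ (h x) := by linarith
      rwa [div_le_iff₀ (hFpos x)] at h1
    -- combine
    have htail : tail (convn μ 2) x = A.toReal + B.toReal + C.toReal := by
      unfold tail
      have hAfin : A ≠ ⊤ := ne_top_of_le_ne_top ENNReal.one_ne_top (hfin x _)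
      have hBfin : B ≠ ⊤ := ne_top_of_le_ne_top ENNReal.one_ne_top (hfin x _)
      have hCfin : C ≠ ⊤ := ne_top_of_le_ne_top ENNReal.one_ne_top (hfin x _)
      rw [hconv2, hsplit, ENNReal.toReal_add (ENNReal.add_ne_top.2 ⟨hAfin, hBfin⟩) hCfin,
        ENNReal.toReal_add hAfin hBfin]
    rw [div_le_iff₀ (hFpos x), htail]
    have hFh0' : 0 ≤ tail μ (h x) := ENNReal.toReal_nonneg
    nlinarith [hFpos x, hAle, hBle, hCle, hKle, (hFpos x).le]
  -- squeeze
  have hlim1 : Tendsto (fun x => 2 - tail μ x) atTop (nhds 2) := by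
    have := hF0.const_sub 2; simpa using this
  have hlim2 : Tendsto (fun x => 2 + (2 + c) * tail μ (h x)) atTop (nhds 2) := by
    have := (hFh0.const_mul (2 + c)).const_add 2
    simpa using this
  exact tendsto_of_tendsto_of_tendsto_of_le_of_le' hlim1 hlim2 hlow hup
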